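/- Let n be an odd positive integer. Then the wreath product (Z/nZ) ≀ (Z/2Z) is isomorphic as a group to the direct product (Z/nZ) × D_n. Explicitly, writing elements of (Z/nZ) ≀ (Z/2Z) as triples (2a, 2b, ε) with a, b ∈ Z/nZ and ε ∈ Z/2Z, the map Φ(2a, 2b, ε) = (a + b, σ^{a-b} τ^{ε}) is a well-defined group isomorphism onto (Z/nZ) × D_n. -/

import Mathlib

noncomputable section

/-- The permutation action of `G` on `⊕_{g ∈ G} H`: `(σ • x)_g = x_{σ⁻¹ g}`. -/
def wreathAction (H G : Type*) [Group H] [Group G] : G →* MulAut (G → H) where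
  toFun g := MulEquiv.arrowCongr (Equiv.mulLeft g) (MulEquiv.refl H)
  map_one' := by
    ext x g
    simp [MulEquiv.arrowCongr]
    rfl
  map_mul' := by
    intro a b
    ext x g
    simp [MulEquiv.arrowCongr, mul_assoc, Equiv.Perm.mul_def, Equiv.mulLeft]

/-- The wreath product `H ≀ G = (⊕_{g ∈ G} H) ⋊ G`. -/
abbrev WreathProduct (H G : Type*) [Group H] [Group G] : Type _ :=
  SemidirectProduct (G → H) G (wreathAction H G)

/-- The element `(u, v)` of `⊕_{g ∈ ℤ/2ℤ} (ℤ/nℤ)`: the function on `ℤ/2ℤ` with value `u` at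
`0` and `v` at `1`. -/
def wreathPair (n : ℕ) (u v : ZMod n) :
    Multiplicative (ZMod 2) → Multiplicative (ZMod n) :=
  fun t => if Multiplicative.toAdd t = 0 then Multiplicative.ofAdd u else Multiplicative.ofAdd v

/-- Forward map of the isomorphism. -/
def wreathPhi (n : ℕ)
    (x : WreathProduct (Multiplicative (ZMod n)) (Multiplicative (ZMod 2))) :
    Multiplicative (ZMod n) × DihedralGroup n :=
  let h : ZMod n := (2 : ZMod n)⁻¹
  let u : ZMod n := Multiplicative.toAdd (x.left (Multiplicative.ofAdd 0))
  let v : ZMod n := Multiplicative.toAdd (x.left (Multiplicative.ofAdd 1))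
  (Multiplicative.ofAdd (h * u + h * v),
    if Multiplicative.toAdd x.right = 0 then DihedralGroup.r (h * u - h * v)
    else DihedralGroup.sr (h * v - h * u))

/-- Inverse map of the isomorphism. -/
def wreathPsi (n : ℕ) (y : Multiplicative (ZMod n) × DihedralGroup n) :
    WreathProduct (Multiplicative (ZMod n)) (Multiplicative (ZMod 2)) :=
  match y.2 with
  | DihedralGroup.r j =>
      ⟨wreathPair n (Multiplicative.toAdd y.1 + j) (Multiplicative.toAdd y.1 - j),
        Multiplicative.ofAdd 0⟩
  | DihedralGroup.sr j =>
      ⟨wreathPair n (Multiplicative.toAdd y.1 - j) (Multiplicative.toAdd y.1 + j),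
        Multiplicative.ofAdd 1⟩

lemma wreath_mul_left_eval (n : ℕ)
    (x y : WreathProduct (Multiplicative (ZMod n)) (Multiplicative (ZMod 2)))
    (t : Multiplicative (ZMod 2)) :
    (x * y).left t = x.left t * y.left (x.right⁻¹ * t) := rfl

/-- For odd `n`, the wreath product `(ℤ/nℤ) ≀ (ℤ/2ℤ)` is isomorphic to `(ℤ/nℤ) × Dₙ` via the
map `Φ(2a, 2b, ε) = (a + b, σ^{a-b} τ^ε)`, where `σ = r 1` and `τ = sr 0` in the dihedral
group `Dₙ` of order `2n` (so `σ^{a-b} = r (a-b)` and `σ^{a-b} τ = sr (b-a)`). -/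
theorem wreath_product_cyclic_two_iso_dihedral (n : ℕ) (hn : Odd n) (hpos : 0 < n) :
    ∃ Φ : WreathProduct (Multiplicative (ZMod n)) (Multiplicative (ZMod 2)) ≃*
        Multiplicative (ZMod n) × DihedralGroup n,
      ∀ (a b : ZMod n) (ε : ZMod 2),
        Φ ⟨wreathPair n (2 * a) (2 * b), Multiplicative.ofAdd ε⟩ =
          (Multiplicative.ofAdd (a + b),
            if ε = 0 then DihedralGroup.r (a - b) else DihedralGroup.sr (b - a)) := by
  classical
  have h2 : IsUnit (2 : ZMod n) := by
    have hc : ((2 : ℕ) : ZMod n) = 2 := by push_cast; ring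
    rw [← hc, ZMod.isUnit_iff_coprime]
    exact Nat.coprime_two_left.mpr hn
  have hmul : (2 : ZMod n)⁻¹ * 2 = 1 := ZMod.inv_mul_of_unit 2 h2
  set h : ZMod n := (2 : ZMod n)⁻¹ with hh
  have z2 : ∀ z : ZMod 2, z = 0 ∨ z = 1 := by decide
  have ofAdd_cases : ∀ t : Multiplicative (ZMod 2),
      t = Multiplicative.ofAdd 0 ∨ t = Multiplicative.ofAdd 1 := by decide
  have one_ne : (1 : ZMod 2) ≠ 0 := by decide
  have e00 : (Multiplicative.ofAdd (0 : ZMod 2))⁻¹ * Multiplicative.ofAdd 0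
      = Multiplicative.ofAdd 0 := by decide
  have e01 : (Multiplicative.ofAdd (0 : ZMod 2))⁻¹ * Multiplicative.ofAdd 1
      = Multiplicative.ofAdd 1 := by decide
  have e10 : (Multiplicative.ofAdd (1 : ZMod 2))⁻¹ * Multiplicative.ofAdd 0
      = Multiplicative.ofAdd 1 := by decide
  have e11 : (Multiplicative.ofAdd (1 : ZMod 2))⁻¹ * Multiplicative.ofAdd 1
      = Multiplicative.ofAdd 0 := by decide
  have m00 : Multiplicative.toAdd ((Multiplicative.ofAdd (0 : ZMod 2)) *
      Multiplicative.ofAdd 0) = 0 := by decide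
  have m01 : Multiplicative.toAdd ((Multiplicative.ofAdd (0 : ZMod 2)) *
      Multiplicative.ofAdd 1) = 1 := by decide
  have m10 : Multiplicative.toAdd ((Multiplicative.ofAdd (1 : ZMod 2)) *
      Multiplicative.ofAdd 0) = 1 := by decide
  have m11 : Multiplicative.toAdd ((Multiplicative.ofAdd (1 : ZMod 2)) *
      Multiplicative.ofAdd 1) = 0 := by decide
  refine ⟨{ toFun := wreathPhi n, invFun := wreathPsi n,
            left_inv := ?_, right_inv := ?_, map_mul' := ?_ }, ?_⟩
  · -- left inverse
    intro x
    rcases z2 (Multiplicative.toAdd x.right) with hs | hs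
    · have hx : x.right = Multiplicative.ofAdd (0 : ZMod 2) := by
        rw [← ofAdd_toAdd x.right, hs]
      simp only [wreathPhi, wreathPsi, hs, eq_self_iff_true, ite_true, toAdd_ofAdd]
      ext t
      · rcases ofAdd_cases t with ht | ht
        · subst ht
          simp only [wreathPair, toAdd_ofAdd, eq_self_iff_true, ite_true]
          conv_rhs => rw [← ofAdd_toAdd (x.left (Multiplicative.ofAdd (0 : ZMod 2)))]
          congr 1
          simp only [toAdd_ofAdd]
          linear_combination
            (Multiplicative.toAdd (x.left (Multiplicative.ofAdd (0 : ZMod 2)))) * hmul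
        · subst ht
          simp only [wreathPair, toAdd_ofAdd, one_ne, ite_false]
          conv_rhs => rw [← ofAdd_toAdd (x.left (Multiplicative.ofAdd (1 : ZMod 2)))]
          congr 1
          simp only [toAdd_ofAdd]
          linear_combination
            (Multiplicative.toAdd (x.left (Multiplicative.ofAdd (1 : ZMod 2)))) * hmul
      · exact hx.symm
    · have hx : x.right = Multiplicative.ofAdd (1 : ZMod 2) := by
        rw [← ofAdd_toAdd x.right, hs]
      simp only [wreathPhi, wreathPsi, hs, one_ne, ite_false, toAdd_ofAdd]
      ext t
      · rcases ofAdd_cases t with ht | ht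
        · subst ht
          simp only [wreathPair, toAdd_ofAdd, eq_self_iff_true, ite_true]
          conv_rhs => rw [← ofAdd_toAdd (x.left (Multiplicative.ofAdd (0 : ZMod 2)))]
          congr 1
          simp only [toAdd_ofAdd]
          linear_combination
            (Multiplicative.toAdd (x.left (Multiplicative.ofAdd (0 : ZMod 2)))) * hmul
        · subst ht
          simp only [wreathPair, toAdd_ofAdd, one_ne, ite_false]
          conv_rhs => rw [← ofAdd_toAdd (x.left (Multiplicative.ofAdd (1 : ZMod 2)))]
          congr 1
          simp only [toAdd_ofAdd]
          linear_combination
            (Multiplicative.toAdd (x.left (Multiplicative.ofAdd (1 : ZMod 2)))) * hmul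
      · exact hx.symm
  · -- right inverse
    intro y
    obtain ⟨c, d⟩ := y
    cases d with
    | r j =>
        simp only [wreathPsi, wreathPhi, wreathPair, toAdd_ofAdd, eq_self_iff_true,
          ite_true, one_ne, ite_false]
        rw [Prod.mk.injEq]
        constructor
        · conv_rhs => rw [← ofAdd_toAdd c]
          congr 1
          linear_combination (Multiplicative.toAdd c) * hmul
        · congr 1
          linear_combination j * hmul
    | sr j =>
        simp only [wreathPsi, wreathPhi, wreathPair, toAdd_ofAdd, eq_self_iff_true,
          ite_true, one_ne, ite_false]
        rw [Prod.mk.injEq]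
        constructor
        · conv_rhs => rw [← ofAdd_toAdd c]
          congr 1
          linear_combination (Multiplicative.toAdd c) * hmul
        · congr 1
          linear_combination j * hmul
  · -- multiplicativity
    intro x y
    rcases z2 (Multiplicative.toAdd x.right) with hs | hs <;>
    rcases z2 (Multiplicative.toAdd y.right) with ht | ht <;>
    [ (have hx : x.right = Multiplicative.ofAdd (0 : ZMod 2) := by
        rw [← ofAdd_toAdd x.right, hs];
       have hy : y.right = Multiplicative.ofAdd (0 : ZMod 2) := by
        rw [← ofAdd_toAdd y.right, ht]);
      (have hx : x.right = Multiplicative.ofAdd (0 : ZMod 2) := by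
        rw [← ofAdd_toAdd x.right, hs];
       have hy : y.right = Multiplicative.ofAdd (1 : ZMod 2) := by
        rw [← ofAdd_toAdd y.right, ht]);
      (have hx : x.right = Multiplicative.ofAdd (1 : ZMod 2) := by
        rw [← ofAdd_toAdd x.right, hs];
       have hy : y.right = Multiplicative.ofAdd (0 : ZMod 2) := by
        rw [← ofAdd_toAdd y.right, ht]);
      (have hx : x.right = Multiplicative.ofAdd (1 : ZMod 2) := by
        rw [← ofAdd_toAdd x.right, hs];
       have hy : y.right = Multiplicative.ofAdd (1 : ZMod 2) := by
        rw [← ofAdd_toAdd y.right, ht]) ] <;>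
    · simp only [wreathPhi, wreath_mul_left_eval, SemidirectProduct.mul_right,
        hx, hy, e00, e01, e10, e11, m00, m01, m10, m11, toAdd_mul, toAdd_ofAdd,
        eq_self_iff_true, ite_true, one_ne, ite_false, Prod.mk_mul_mk,
        DihedralGroup.r_mul_r, DihedralGroup.r_mul_sr, DihedralGroup.sr_mul_r,
        DihedralGroup.sr_mul_sr, ← ofAdd_add]
      rw [Prod.mk.injEq]
      constructor
      · congr 1; ring
      · simp only [show (0 : ZMod 2) + 0 = 0 from by decide,
          show (0 : ZMod 2) + 1 = 1 from by decide,
          show (1 : ZMod 2) + 0 = 1 from by decide,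
          show (1 : ZMod 2) + 1 = 0 from by decide]
        first
          | rw [if_pos trivial]
          | rw [if_neg one_ne]
        congr 1; ring
  · -- the explicit formula
    intro a b ε
    show (wreathPhi n _ : _) = _
    simp only [wreathPhi, wreathPair, toAdd_ofAdd, eq_self_iff_true, ite_true,
      one_ne, ite_false]
    rw [Prod.mk.injEq]
    constructor
    · congr 1
      linear_combination (a + b) * hmul
    · rcases z2 ε with hε | hε <;> subst hε
      · simp only [eq_self_iff_true, ite_true]
        congr 1
        linear_combination (a - b) * hmul
      · simp only [one_ne, ite_false]
        congr 1
        linear_combination (b - a) * hmul
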